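/- Let U, W ⊆ Kⁿ be K-vector subspaces of the same dimension. Then: (1) res(U) = res(W) if and only if Δ(U, W) < 1; (2) for every M ∈ GLₙ(𝒪), Δ(U, W) = Δ(M(U), M(W)). -/

import Mathlib

noncomputable section

open scoped Classical Pointwise

section Preamble

variable {K : Type*} [Field K] {Γ : Type*} [LinearOrderedCommGroupWithZero Γ]

instance (priority := 100) : OrderBot Γ where
  bot := 0
  bot_le _ := zero_le'

/-- The max-valuation on `K^n`: `v(a) = maxᵢ v(aᵢ)`. -/
def vv (v : Valuation K Γ) {n : ℕ} (x : Fin n → K) : Γ :=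
  Finset.univ.sup fun i => v (x i)

/-- `rvEq v x y` expresses `rv(x) = rv(y)` in `RV⁽ⁿ⁾ = Kⁿ/∼`, where
`x ∼ y` iff `v(x−y) < v(x)` or `x = y = 0`. -/
def rvEq (v : Valuation K Γ) {n : ℕ} (x y : Fin n → K) : Prop :=
  vv v (x - y) < vv v x ∨ (x = 0 ∧ y = 0)

/-- Balls in `K` (with `K` itself counting as a ball). -/
def IsBall1 (v : Valuation K Γ) (B : Set K) : Prop :=
  B = Set.univ ∨ ∃ a : K, ∃ γ : Γ, γ ≠ 0 ∧
    (B = {x | v (x - a) < γ} ∨ B = {x | v (x - a) ≤ γ})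

/-- Balls in `Kⁿ` (with `Kⁿ` itself counting as a ball). -/
def IsBall (v : Valuation K Γ) {n : ℕ} (B : Set (Fin n → K)) : Prop :=
  B = Set.univ ∨ ∃ a : Fin n → K, ∃ γ : Γ, γ ≠ 0 ∧
    (B = {x | vv v (x - a) < γ} ∨ B = {x | vv v (x - a) ≤ γ})

/-- Spherical completeness: every nonempty chain of balls in `K` has nonempty
intersection. -/
def SphericallyComplete (v : Valuation K Γ) : Prop :=
  ∀ C : Set (Set K), C.Nonempty → (∀ B ∈ C, IsBall1 v B) → IsChain (· ⊆ ·) C →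
    (⋂ B ∈ C, B).Nonempty

/-- The residue field `K̄` of the valuation ring `𝒪 = {x | v x ≤ 1}`. -/
def Kbar (v : Valuation K Γ) : Type _ :=
  IsLocalRing.ResidueField v.valuationSubring

instance (v : Valuation K Γ) : Field (Kbar v) :=
  inferInstanceAs (Field (IsLocalRing.ResidueField v.valuationSubring))

/-- The residue map `res : 𝒪 → K̄`, extended by the junk value `0` outside `𝒪`. -/
def res' (v : Valuation K Γ) (x : K) : Kbar v :=
  if h : v x ≤ 1 then IsLocalRing.residue v.valuationSubring ⟨x, h⟩ else 0

/-- The coordinatewise residue map on `Kⁿ`. -/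
def resv (v : Valuation K Γ) {n : ℕ} (x : Fin n → K) : Fin n → Kbar v :=
  fun i => res' v (x i)

/-- `res(S)` for a set `S ⊆ Kⁿ`: the set of residues of points of `S ∩ 𝒪ⁿ`. -/
def resSet (v : Valuation K Γ) {n : ℕ} (S : Set (Fin n → K)) : Set (Fin n → Kbar v) :=
  resv v '' {x ∈ S | ∀ i, v (x i) ≤ 1}

/-- `dir(x) = res(K·x) ⊆ K̄ⁿ`. -/
def dirSet (v : Valuation K Γ) {n : ℕ} (x : Fin n → K) : Set (Fin n → Kbar v) :=
  resSet v {y | ∃ c : K, y = c • x}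

/-- The coordinate projection `Kⁿ → K^d` selecting the coordinates `σ 0 < σ 1 < ⋯`. -/
def proj {A : Type*} {n d : ℕ} (σ : Fin d → Fin n) (x : Fin n → A) : Fin d → A :=
  fun k => x (σ k)

/-- `σ` (a strictly increasing selection of `d` of the `n` coordinates) is an
exhibition of the `K̄`-subspace `Ū ⊆ K̄ⁿ` if the corresponding coordinate projection
`K̄ⁿ → K̄^d` restricts to an isomorphism from `Ū` onto `K̄^d`. -/
def IsExhibition (v : Valuation K Γ) {n d : ℕ} (σ : Fin d → Fin n)
    (Ubar : Submodule (Kbar v) (Fin n → Kbar v)) : Prop :=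
  StrictMono σ ∧ Set.BijOn (proj σ) (Ubar : Set (Fin n → Kbar v)) Set.univ

/-- `affdir(C)`: the `K̄`-subspace of `K̄ⁿ` generated by all `dir(x − x')`, `x, x' ∈ C`. -/
def affdir (v : Valuation K Γ) {n : ℕ} (C : Set (Fin n → K)) :
    Submodule (Kbar v) (Fin n → Kbar v) :=
  Submodule.span (Kbar v) (⋃ x ∈ C, ⋃ x' ∈ C, dirSet v (x - x'))

/-- A matrix has entries in the valuation ring `𝒪`. -/
def EntriesInO (v : Valuation K Γ) {n : ℕ} (M : Matrix (Fin n) (Fin n) K) : Prop :=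
  ∀ i j, v (M i j) ≤ 1

/-- `M ∈ GLₙ(𝒪)`: `M` is invertible, with entries in `𝒪`, and its inverse also has
entries in `𝒪`. -/
def MemGLO (v : Valuation K Γ) {n : ℕ} (M : Matrix (Fin n) (Fin n) K) : Prop :=
  EntriesInO v M ∧ ∃ N : Matrix (Fin n) (Fin n) K,
    M * N = 1 ∧ N * M = 1 ∧ EntriesInO v N

/-- The entrywise residue matrix of `M`. -/
def resM (v : Valuation K Γ) {n : ℕ} (M : Matrix (Fin n) (Fin n) K) :
    Matrix (Fin n) (Fin n) (Kbar v) :=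
  fun i j => res' v (M i j)

/-- `DeltaLE v U W γ` expresses `Δ(U, W) ≤ γ`: for every `u ∈ U` there is `w ∈ W`
with `v(u − w) ≤ v(u)·γ`. -/
def DeltaLE (v : Valuation K Γ) {n : ℕ} (U W : Submodule K (Fin n → K)) (γ : Γ) : Prop :=
  ∀ u ∈ U, ∃ w ∈ W, vv v (u - w) ≤ vv v u * γ

/-- `IsDelta v U W γ` expresses `Δ(U, W) = γ`: `γ` is the minimum of all admissible
bounds. -/
def IsDelta (v : Valuation K Γ) {n : ℕ} (U W : Submodule K (Fin n → K)) (γ : Γ) : Prop :=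
  DeltaLE v U W γ ∧ ∀ δ : Γ, DeltaLE v U W δ → γ ≤ δ

end Preamble

variable {K : Type*} [Field K] {Γ : Type*} [LinearOrderedCommGroupWithZero Γ]


section Aux

variable {K : Type*} [Field K] {Γ : Type*} [LinearOrderedCommGroupWithZero Γ]

lemma zero_lt_one'' : (0 : Γ) < 1 := lt_of_le_of_ne zero_le' (Ne.symm one_ne_zero)

variable (v : Valuation K Γ) {n : ℕ}

lemma vv_le_iff {x : Fin n → K} {γ : Γ} : vv v x ≤ γ ↔ ∀ i, v (x i) ≤ γ := by
  simp [vv, Finset.sup_le_iff]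

lemma le_vv (x : Fin n → K) (i : Fin n) : v (x i) ≤ vv v x :=
  Finset.le_sup (f := fun i => v (x i)) (Finset.mem_univ i)

lemma sup_zero_eq {ι : Type*} (s : Finset ι) : (s.sup fun _ => (0:Γ)) = 0 :=
  le_antisymm (Finset.sup_le fun _ _ => le_rfl) zero_le'

lemma sup_univ_fin_succ {d : ℕ} (f : Fin (d + 1) → Γ) :
    Finset.univ.sup f = max (f 0) (Finset.univ.sup fun i : Fin d => f i.succ) := by
  rw [Fin.univ_succ, Finset.sup_cons, Finset.sup_map]
  rfl

lemma vv_zero : vv v (0 : Fin n → K) = 0 := by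
  have : vv v (0 : Fin n → K) = Finset.univ.sup fun _ : Fin n => (0:Γ) := by
    simp [vv]
  rw [this, sup_zero_eq]

lemma vv_eq_zero_iff {x : Fin n → K} : vv v x = 0 ↔ x = 0 := by
  constructor
  · intro h
    funext i
    have := le_vv v x i
    rw [h, le_zero_iff, Valuation.zero_iff] at this
    simpa using this
  · rintro rfl; exact vv_zero v

lemma vv_lt_iff {x : Fin n → K} {γ : Γ} (hγ : (0:Γ) < γ) :
    vv v x < γ ↔ ∀ i, v (x i) < γ := by
  rw [vv, Finset.sup_lt_iff (by rw [bot_eq_zero]; exact hγ)]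
  simp

lemma vv_add_le (x y : Fin n → K) : vv v (x + y) ≤ max (vv v x) (vv v y) := by
  rw [vv_le_iff]
  intro i
  calc v ((x + y) i) = v (x i + y i) := rfl
    _ ≤ max (v (x i)) (v (y i)) := v.map_add _ _
    _ ≤ max (vv v x) (vv v y) := max_le_max (le_vv v x i) (le_vv v y i)

lemma vv_sub_le (x y : Fin n → K) : vv v (x - y) ≤ max (vv v x) (vv v y) := by
  rw [vv_le_iff]
  intro i
  calc v ((x - y) i) = v (x i - y i) := rfl
    _ ≤ max (v (x i)) (v (y i)) := v.map_sub _ _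
    _ ≤ max (vv v x) (vv v y) := max_le_max (le_vv v x i) (le_vv v y i)

lemma vv_smul_le (c : K) (x : Fin n → K) : vv v (c • x) ≤ v c * vv v x := by
  rw [vv_le_iff]
  intro i
  calc v ((c • x) i) = v c * v (x i) := by simp [Valuation.map_mul]
    _ ≤ v c * vv v x := mul_le_mul_right (le_vv v x i) _

lemma vv_smul (c : K) (x : Fin n → K) : vv v (c • x) = v c * vv v x := by
  rcases eq_or_ne c 0 with rfl | hc
  · simp [vv_zero]
  refine le_antisymm (vv_smul_le v c x) ?_
  have hvc : v c ≠ 0 := by simpa [Valuation.zero_iff] using hc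
  have h2 : vv v x ≤ v c⁻¹ * vv v (c • x) := by
    have := vv_smul_le v c⁻¹ (c • x)
    rwa [inv_smul_smul₀ hc] at this
  calc v c * vv v x ≤ v c * (v c⁻¹ * vv v (c • x)) := mul_le_mul_right h2 _
    _ = vv v (c • x) := by
        rw [← mul_assoc, ← Valuation.map_mul, mul_inv_cancel₀ hc]
        simp

lemma vv_sum_le {ι : Type*} (s : Finset ι) (f : ι → (Fin n → K)) {g : Γ}
    (h : ∀ i ∈ s, vv v (f i) ≤ g) : vv v (∑ i ∈ s, f i) ≤ g := by
  rw [vv_le_iff]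
  intro j
  have : (∑ i ∈ s, f i) j = ∑ i ∈ s, f i j := by simp
  rw [this]
  exact v.map_sum_le fun i hi => (le_vv v (f i) j).trans (h i hi)

/-- Existence of an "orthogonal basis" for any subspace of `Kⁿ` with respect
to the sup-valuation `vv`. -/
lemma exists_orthobasis (N : ℕ) (U : Submodule K (Fin n → K))
    (hN : Module.finrank K U ≤ N) :
    ∃ (d : ℕ) (u : Fin d → (Fin n → K)),
      (∀ i, u i ∈ U) ∧ (∀ i, vv v (u i) = 1) ∧
      (∀ x ∈ U, ∃ c : Fin d → K, x = ∑ i, c i • u i) ∧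
      (∀ c : Fin d → K, vv v (∑ i, c i • u i) = Finset.univ.sup fun i => v (c i)) := by
  induction N generalizing U with
  | zero =>
      have hU : U = ⊥ := Submodule.finrank_eq_zero.mp (Nat.le_zero.mp hN)
      subst hU
      refine ⟨0, fun i => 0, by simp, by simp, ?_, ?_⟩
      · intro x hx
        refine ⟨fun i => 0, ?_⟩
        simpa using (Submodule.mem_bot K).mp hx
      · intro c
        rw [show (∑ i : Fin 0, c i • (0 : Fin n → K)) = 0 by simp, vv_zero,
          Finset.univ_eq_empty, Finset.sup_empty]
        exact bot_eq_zero.symm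
  | succ N ih =>
      rcases eq_or_ne U ⊥ with rfl | hUne
      · refine ⟨0, fun i => 0, by simp, by simp, ?_, ?_⟩
        · intro x hx
          refine ⟨fun i => 0, ?_⟩
          simpa using (Submodule.mem_bot K).mp hx
        · intro c
          rw [show (∑ i : Fin 0, c i • (0 : Fin n → K)) = 0 by simp, vv_zero,
            Finset.univ_eq_empty, Finset.sup_empty]
          exact bot_eq_zero.symm
      obtain ⟨u, huU, hune⟩ := Submodule.ne_bot_iff U |>.mp hUne
      have hvvu : vv v u ≠ 0 := fun h => hune ((vv_eq_zero_iff v).mp h)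
      have hne : (Finset.univ : Finset (Fin n)).Nonempty := by
        rcases (Finset.univ : Finset (Fin n)).eq_empty_or_nonempty with he | hne
        · exfalso
          apply hvvu
          rw [vv, he]
          exact Finset.sup_empty.trans bot_eq_zero
        · exact hne
      obtain ⟨i₀, -, hi₀⟩ := Finset.exists_mem_eq_sup Finset.univ hne fun i => v (u i)
      have hvu : vv v u = v (u i₀) := hi₀
      have hui₀ : u i₀ ≠ 0 := by
        intro h
        apply hvvu
        rw [hvu, h, Valuation.map_zero]
      set u' : Fin n → K := (u i₀)⁻¹ • u with hu'def
      have hu'U : u' ∈ U := U.smul_mem _ huU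
      have hu'i₀ : u' i₀ = 1 := by
        simp [hu'def, inv_mul_cancel₀ hui₀]
      have hvvu' : vv v u' = 1 := by
        rw [hu'def, vv_smul, hvu, map_inv₀, inv_mul_cancel₀]
        rw [← hvu]; exact hvvu
      set π : (Fin n → K) →ₗ[K] K := LinearMap.proj i₀ with hπ
      set U' : Submodule K (Fin n → K) := U ⊓ LinearMap.ker π with hU'
      have hu'notU' : u' ∉ U' := by
        intro h
        rw [hU', Submodule.mem_inf] at h
        have : π u' = 0 := h.2
        rw [hπ] at this
        simp only [LinearMap.proj_apply] at this
        rw [hu'i₀] at this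
        exact one_ne_zero this
      have hlt : U' < U := lt_of_le_of_ne inf_le_left (fun h => hu'notU' (h ▸ hu'U))
      have hrank : Module.finrank K U' ≤ N := by
        have := Submodule.finrank_lt_finrank_of_lt (t := U) hlt
        omega
      obtain ⟨d, w, hwU, hwvv, hwspan, hworth⟩ := ih U' hrank
      refine ⟨d + 1, Fin.cons u' w, ?_, ?_, ?_, ?_⟩
      · intro i
        refine Fin.cases ?_ ?_ i
        · simpa using hu'U
        · intro j
          have := hwU j
          rw [hU', Submodule.mem_inf] at this
          simpa using this.1
      · intro i
        refine Fin.cases ?_ ?_ i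
        · simpa using hvvu'
        · intro j
          simpa using hwvv j
      · intro x hx
        have hy : x - x i₀ • u' ∈ U' := by
          rw [hU', Submodule.mem_inf]
          refine ⟨Submodule.sub_mem U hx (U.smul_mem _ hu'U), ?_⟩
          rw [LinearMap.mem_ker, hπ]
          simp [hu'i₀]
        obtain ⟨c', hc'⟩ := hwspan _ hy
        refine ⟨Fin.cons (x i₀) c', ?_⟩
        rw [Fin.sum_univ_succ]
        simp only [Fin.cons_zero, Fin.cons_succ]
        rw [← hc']
        abel
      · intro c
        rw [Fin.sum_univ_succ]
        simp only [Fin.cons_zero, Fin.cons_succ]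
        set s : Fin n → K := ∑ i : Fin d, c i.succ • w i with hs
        have hss : vv v s = Finset.univ.sup fun i : Fin d => v (c i.succ) := hworth _
        have hsup : (Finset.univ.sup fun i : Fin (d+1) => v (c i))
            = max (v (c 0)) (Finset.univ.sup fun i : Fin d => v (c i.succ)) := by
          rw [sup_univ_fin_succ]
        have hsi₀ : s i₀ = 0 := by
          rw [hs]
          have : (∑ i : Fin d, c i.succ • w i) i₀ = ∑ i : Fin d, c i.succ * (w i) i₀ := by
            simp
          rw [this]
          apply Finset.sum_eq_zero
          intro j _
          have : (w j) i₀ = 0 := by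
            have hwj := hwU j
            rw [hU', Submodule.mem_inf] at hwj
            have := hwj.2
            rw [LinearMap.mem_ker, hπ] at this
            simpa using this
          rw [this, mul_zero]
        have hcoord : v ((c 0 • u' + s) i₀) = v (c 0) := by
          have : (c 0 • u' + s) i₀ = c 0 := by
            simp [hu'i₀, hsi₀]
          rw [this]
        have hvvc0u' : vv v (c 0 • u') = v (c 0) := by
          rw [vv_smul, hvvu', mul_one]
        rw [hsup, ← hss]
        rcases le_or_gt (vv v s) (v (c 0)) with hle | hlt2
        · rw [max_eq_left hle]
          refine le_antisymm ?_ ?_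
          · calc vv v (c 0 • u' + s) ≤ max (vv v (c 0 • u')) (vv v s) := vv_add_le v _ _
              _ = v (c 0) := by rw [hvvc0u', max_eq_left hle]
          · rw [← hcoord]
            exact le_vv v _ i₀
        · rw [max_eq_right hlt2.le]
          refine le_antisymm ?_ ?_
          · calc vv v (c 0 • u' + s) ≤ max (vv v (c 0 • u')) (vv v s) := vv_add_le v _ _
              _ = vv v s := by rw [hvvc0u', max_eq_right hlt2.le]
          · by_contra hcon
            push_neg at hcon
            have : vv v s ≤ max (vv v (c 0 • u' + s)) (vv v (c 0 • u')) := by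
              have heq : s = (c 0 • u' + s) - c 0 • u' := by abel
              calc vv v s = vv v ((c 0 • u' + s) - c 0 • u') := by rw [← heq]
                _ ≤ _ := vv_sub_le v _ _
            rw [hvvc0u'] at this
            have : vv v s < vv v s := lt_of_le_of_lt this (max_lt hcon hlt2)
            exact lt_irrefl _ this

/-! ### Residue map lemmas -/

lemma mem_maximalIdeal_iff (x : v.valuationSubring) :
    x ∈ IsLocalRing.maximalIdeal v.valuationSubring ↔ v (x : K) < 1 := by
  rw [IsLocalRing.mem_maximalIdeal, mem_nonunits_iff]
  constructor
  · intro h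
    rcases lt_or_eq_of_le x.2 with h1 | h1
    · exact h1
    · exfalso
      apply h
      have hx0 : (x : K) ≠ 0 := by
        intro h0
        rw [h0, Valuation.map_zero] at h1
        exact one_ne_zero h1.symm
      have hinv : v ((x : K)⁻¹) ≤ 1 := by
        rw [map_inv₀, h1]
        norm_num
      refine IsUnit.of_mul_eq_one ⟨(x : K)⁻¹, hinv⟩ ?_
      ext
      simp [mul_inv_cancel₀ hx0]
  · intro h hu
    obtain ⟨y, hy⟩ := hu.exists_right_inv
    have : v (x : K) * v ((y : K)) = 1 := by
      rw [← Valuation.map_mul]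
      have h3 : ((x : K) * (y : K)) = ((x * y : v.valuationSubring) : K) := rfl
      rw [h3, hy]
      simp
    have h2 : (1:Γ) ≤ v (x:K) * 1 := by
      calc (1:Γ) = v (x : K) * v (y : K) := this.symm
        _ ≤ v (x : K) * 1 := mul_le_mul_right y.2 _
    rw [mul_one] at h2
    exact absurd h (not_lt.mpr h2)

lemma res'_of_le {x : K} (hx : v x ≤ 1) :
    res' v x = IsLocalRing.residue v.valuationSubring ⟨x, hx⟩ := dif_pos hx

lemma res'_eq_zero_iff {x : K} (hx : v x ≤ 1) : res' v x = 0 ↔ v x < 1 := by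
  rw [res'_of_le v hx]
  exact (IsLocalRing.residue_eq_zero_iff _).trans (mem_maximalIdeal_iff v _)

lemma res'_add {x y : K} (hx : v x ≤ 1) (hy : v y ≤ 1) :
    res' v (x + y) = res' v x + res' v y := by
  have hxy : v (x + y) ≤ 1 := le_trans (v.map_add x y) (max_le hx hy)
  rw [res'_of_le v hx, res'_of_le v hy, res'_of_le v hxy]
  rw [show (⟨x + y, hxy⟩ : v.valuationSubring) = ⟨x, hx⟩ + ⟨y, hy⟩ from rfl, map_add]
  rfl

lemma res'_mul {x y : K} (hx : v x ≤ 1) (hy : v y ≤ 1) :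
    res' v (x * y) = res' v x * res' v y := by
  have hxy : v (x * y) ≤ 1 := by
    rw [Valuation.map_mul]
    calc v x * v y ≤ 1 * 1 := mul_le_mul' hx hy
      _ = 1 := mul_one 1
  rw [res'_of_le v hx, res'_of_le v hy, res'_of_le v hxy]
  rw [show (⟨x * y, hxy⟩ : v.valuationSubring) = ⟨x, hx⟩ * ⟨y, hy⟩ from rfl, map_mul]
  rfl

lemma res'_zero : res' v (0 : K) = 0 := by
  rw [res'_of_le v (by rw [Valuation.map_zero]; exact zero_le')]
  rw [show (⟨(0:K), _⟩ : v.valuationSubring) = 0 from rfl, map_zero]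
  rfl

lemma res'_surj (k : Kbar v) : ∃ c : K, v c ≤ 1 ∧ res' v c = k := by
  obtain ⟨x, hx⟩ := IsLocalRing.residue_surjective (R := v.valuationSubring) k
  have hx1 : v (x : K) ≤ 1 := x.2
  refine ⟨(x : K), hx1, ?_⟩
  rw [res'_of_le v hx1, ← hx]

lemma resv_add {x y : Fin n → K} (hx : vv v x ≤ 1) (hy : vv v y ≤ 1) :
    resv v (x + y) = resv v x + resv v y := by
  funext i
  exact res'_add v ((le_vv v x i).trans hx) ((le_vv v y i).trans hy)

lemma resv_zero : resv v (0 : Fin n → K) = 0 := by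
  funext i
  exact res'_zero v

lemma resv_smul {c : K} {x : Fin n → K} (hc : v c ≤ 1) (hx : vv v x ≤ 1) :
    resv v (c • x) = res' v c • resv v x := by
  funext i
  exact res'_mul v hc ((le_vv v x i).trans hx)

lemma resv_eq_zero_iff {x : Fin n → K} (hx : vv v x ≤ 1) :
    resv v x = 0 ↔ vv v x < 1 := by
  rw [vv_lt_iff v zero_lt_one'']
  constructor
  · intro h i
    have : res' v (x i) = 0 := congrFun h i
    exact (res'_eq_zero_iff v ((le_vv v x i).trans hx)).mp this
  · intro h
    funext i
    exact (res'_eq_zero_iff v ((le_vv v x i).trans hx)).mpr (h i)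

lemma resv_sub_eq_zero {x y : Fin n → K} (hx : vv v x ≤ 1) (hy : vv v y ≤ 1)
    (h : vv v (x - y) < 1) : resv v x = resv v y := by
  have hxy : vv v (x - y) ≤ 1 := h.le
  have := (resv_eq_zero_iff v hxy).mpr h
  have heq : resv v x = resv v (x - y) + resv v y := by
    rw [← resv_add v hxy hy, sub_add_cancel]
  rw [heq, this, zero_add]

lemma resv_sum {d : ℕ} (c : Fin d → K) (u : Fin d → (Fin n → K))
    (hc : ∀ i, v (c i) ≤ 1) (hu : ∀ i, vv v (u i) ≤ 1) :
    resv v (∑ i, c i • u i) = ∑ i, res' v (c i) • resv v (u i) := by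
  have key : ∀ s : Finset (Fin d),
      resv v (∑ i ∈ s, c i • u i) = ∑ i ∈ s, res' v (c i) • resv v (u i) := by
    intro s
    induction s using Finset.induction_on with
    | empty => simp [resv_zero]
    | @insert a s hns ih =>
        rw [Finset.sum_insert hns, Finset.sum_insert hns]
        have h1 : vv v (c a • u a) ≤ 1 := by
          rw [vv_smul]
          calc v (c a) * vv v (u a) ≤ 1 * 1 := mul_le_mul' (hc a) (hu a)
            _ = 1 := mul_one 1
        have h2 : vv v (∑ i ∈ s, c i • u i) ≤ 1 := by
          apply vv_sum_le
          intro i _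
          rw [vv_smul]
          calc v (c i) * vv v (u i) ≤ 1 * 1 := mul_le_mul' (hc i) (hu i)
            _ = 1 := mul_one 1
        rw [resv_add v h1 h2, resv_smul v (hc a) (hu a), ih]
  exact key Finset.univ

/-- `resSet` of a submodule, as a submodule. -/
def resSub {n : ℕ} (v : Valuation K Γ) (U : Submodule K (Fin n → K)) :
    Submodule (Kbar v) (Fin n → Kbar v) where
  carrier := resSet v (U : Set (Fin n → K))
  add_mem' := by
    rintro a b ⟨x, ⟨hxU, hx1⟩, rfl⟩ ⟨y, ⟨hyU, hy1⟩, rfl⟩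
    refine ⟨x + y, ⟨U.add_mem hxU hyU, ?_⟩, ?_⟩
    · intro i
      calc v ((x + y) i) = v (x i + y i) := rfl
        _ ≤ max (v (x i)) (v (y i)) := v.map_add _ _
        _ ≤ 1 := max_le (hx1 i) (hy1 i)
    · exact resv_add v ((vv_le_iff v).mpr hx1) ((vv_le_iff v).mpr hy1)
  zero_mem' := ⟨0, ⟨U.zero_mem, fun i => by
      rw [show ((0 : Fin n → K) i) = 0 from rfl, Valuation.map_zero]; exact zero_le'⟩,
    resv_zero v⟩
  smul_mem' := by
    rintro k a ⟨x, ⟨hxU, hx1⟩, rfl⟩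
    obtain ⟨c, hc1, hck⟩ := res'_surj v k
    refine ⟨c • x, ⟨U.smul_mem c hxU, ?_⟩, ?_⟩
    · intro i
      calc v ((c • x) i) = v c * v (x i) := by simp [Valuation.map_mul]
        _ ≤ 1 * 1 := mul_le_mul' hc1 (hx1 i)
        _ = 1 := mul_one 1
    · rw [resv_smul v hc1 ((vv_le_iff v).mpr hx1), hck]

lemma resSub_coe (U : Submodule K (Fin n → K)) :
    (resSub v U : Set (Fin n → Kbar v)) = resSet v (U : Set (Fin n → K)) := rfl

lemma mem_resSet_iff {S : Set (Fin n → K)} {a : Fin n → Kbar v} :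
    a ∈ resSet v S ↔ ∃ x, (x ∈ S ∧ vv v x ≤ 1) ∧ resv v x = a := by
  constructor
  · rintro ⟨x, ⟨hS, h1⟩, rfl⟩
    exact ⟨x, ⟨hS, (vv_le_iff v).mpr h1⟩, rfl⟩
  · rintro ⟨x, ⟨hS, h1⟩, rfl⟩
    exact ⟨x, ⟨hS, (vv_le_iff v).mp h1⟩, rfl⟩

lemma finrank_resSub (U : Submodule K (Fin n → K)) :
    Module.finrank (Kbar v) (resSub v U) = Module.finrank K U := by
  obtain ⟨d, u, huU, huvv, huspan, huorth⟩ :=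
    exists_orthobasis v (Module.finrank K U) U le_rfl
  have hu1 : ∀ i, vv v (u i) ≤ 1 := fun i => (huvv i).le
  -- U = span of range u
  have hUspan : U = Submodule.span K (Set.range u) := by
    refine le_antisymm ?_ ?_
    · intro x hx
      obtain ⟨c, rfl⟩ := huspan x hx
      exact Submodule.sum_mem _ fun i _ =>
        Submodule.smul_mem _ _ (Submodule.subset_span ⟨i, rfl⟩)
    · rw [Submodule.span_le]
      rintro _ ⟨i, rfl⟩
      exact huU i
  have hindep : LinearIndependent K u := by
    rw [Fintype.linearIndependent_iff]
    intro c hc i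
    have h0 : vv v (∑ i, c i • u i) = 0 := by rw [hc]; exact vv_zero v
    rw [huorth] at h0
    have : v (c i) ≤ 0 := by
      rw [← h0]
      exact Finset.le_sup (f := fun i => v (c i)) (Finset.mem_univ i)
    rw [le_zero_iff, Valuation.zero_iff] at this
    exact this
  have hrU : Module.finrank K U = d := by
    rw [hUspan, finrank_span_eq_card hindep, Fintype.card_fin]
  -- resSub U = span of residues
  set ub : Fin d → (Fin n → Kbar v) := fun i => resv v (u i) with hub
  have hRspan : resSub v U = Submodule.span (Kbar v) (Set.range ub) := by
    refine le_antisymm ?_ ?_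
    · rintro a ha
      have ha' : a ∈ resSet v (U : Set (Fin n → K)) := ha
      obtain ⟨x, ⟨hxU, hx1⟩, rfl⟩ := (mem_resSet_iff v).mp ha'
      obtain ⟨c, rfl⟩ := huspan x hxU
      have hc1 : ∀ i, v (c i) ≤ 1 := by
        have := huorth c
        rw [this] at hx1
        intro i
        exact le_trans (Finset.le_sup (f := fun i => v (c i)) (Finset.mem_univ i)) hx1
      rw [resv_sum v c u hc1 hu1]
      exact Submodule.sum_mem _ fun i _ =>
        Submodule.smul_mem _ _ (Submodule.subset_span ⟨i, rfl⟩)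
    · rw [Submodule.span_le]
      rintro _ ⟨i, rfl⟩
      exact ⟨u i, ⟨huU i, fun j => (le_vv v (u i) j).trans (hu1 i)⟩, rfl⟩
  have hindepb : LinearIndependent (Kbar v) ub := by
    rw [Fintype.linearIndependent_iff]
    intro g hg i
    choose c hc1 hck using fun i => res'_surj v (g i)
    have hsum : resv v (∑ i, c i • u i) = 0 := by
      rw [resv_sum v c u hc1 hu1]
      rw [← hg]
      congr 1
      funext i
      rw [hck]
    have hle1 : vv v (∑ i, c i • u i) ≤ 1 := by
      rw [huorth]
      exact Finset.sup_le fun i _ => hc1 i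
    have hlt1 : vv v (∑ i, c i • u i) < 1 := (resv_eq_zero_iff v hle1).mp hsum
    rw [huorth] at hlt1
    have : v (c i) < 1 :=
      lt_of_le_of_lt (Finset.le_sup (f := fun i => v (c i)) (Finset.mem_univ i)) hlt1
    rw [← hck i]
    exact (res'_eq_zero_iff v (hc1 i)).mpr this
  rw [hRspan, finrank_span_eq_card hindepb, Fintype.card_fin, hrU]

lemma vv_sub_lt_of_resv_eq {x y : Fin n → K} (hx : vv v x ≤ 1) (hy : vv v y ≤ 1)
    (h : resv v x = resv v y) : vv v (x - y) < 1 := by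
  have hxy : vv v (x - y) ≤ 1 := le_trans (vv_sub_le v x y) (max_le hx hy)
  refine (resv_eq_zero_iff v hxy).mp ?_
  have h2 := resv_add v hxy hy
  rw [sub_add_cancel, h] at h2
  have h3 : resv v (x - y) + resv v y = 0 + resv v y := by
    rw [zero_add]
    exact h2.symm
  exact add_right_cancel h3

/-! ### GL_n(O) lemmas -/

lemma vv_mulVec_le {M : Matrix (Fin n) (Fin n) K} (hM : EntriesInO v M)
    (x : Fin n → K) : vv v (M.mulVec x) ≤ vv v x := by
  rw [vv_le_iff]
  intro i
  rw [Matrix.mulVec, dotProduct]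
  apply v.map_sum_le
  intro j _
  rw [Valuation.map_mul]
  calc v (M i j) * v (x j) ≤ 1 * vv v x := mul_le_mul' (hM i j) (le_vv v x j)
    _ = vv v x := one_mul _

lemma vv_mulVec_eq {M : Matrix (Fin n) (Fin n) K} (hM : MemGLO v M)
    (x : Fin n → K) : vv v (M.mulVec x) = vv v x := by
  obtain ⟨hMO, N, hMN, hNM, hNO⟩ := hM
  refine le_antisymm (vv_mulVec_le v hMO x) ?_
  have hx : N.mulVec (M.mulVec x) = x := by
    rw [Matrix.mulVec_mulVec, hNM, Matrix.one_mulVec]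
  calc vv v x = vv v (N.mulVec (M.mulVec x)) := by rw [hx]
    _ ≤ vv v (M.mulVec x) := vv_mulVec_le v hNO _

lemma deltaLE_map {M : Matrix (Fin n) (Fin n) K} (hM : MemGLO v M)
    {U W : Submodule K (Fin n → K)} {γ : Γ} (h : DeltaLE v U W γ) :
    DeltaLE v (U.map M.mulVecLin) (W.map M.mulVecLin) γ := by
  rintro _ ⟨u, hu, rfl⟩
  obtain ⟨w, hw, hvw⟩ := h u hu
  refine ⟨M.mulVecLin w, ⟨w, hw, rfl⟩, ?_⟩
  have h1 : M.mulVecLin u - M.mulVecLin w = M.mulVec (u - w) := by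
    rw [← map_sub]
    rfl
  rw [h1, vv_mulVec_eq v hM (u - w)]
  rw [show M.mulVecLin u = M.mulVec u from rfl, vv_mulVec_eq v hM u]
  exact hvw

lemma memGLO_inv {M N : Matrix (Fin n) (Fin n) K} (hM : MemGLO v M)
    (hMN : M * N = 1) (hNM : N * M = 1) (hNO : EntriesInO v N) : MemGLO v N :=
  ⟨hNO, M, hNM, hMN, hM.1⟩

lemma map_map_eq {M N : Matrix (Fin n) (Fin n) K} (hNM : N * M = 1)
    (U : Submodule K (Fin n → K)) :
    (U.map M.mulVecLin).map N.mulVecLin = U := by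
  rw [← Submodule.map_comp, ← Matrix.mulVecLin_mul, hNM, Matrix.mulVecLin_one,
    Submodule.map_id]

end Aux

/-- (1) `res U = res W` iff `Δ(U, W) < 1`;
(2) `Δ(U, W) = Δ(M(U), M(W))` for any `M ∈ GLₙ(𝒪)`. -/
theorem delta_lt_one_and_invariance
    (v : Valuation K Γ) {n : ℕ} (U W : Submodule K (Fin n → K))
    (hdim : Module.finrank K U = Module.finrank K W) :
    (∀ γ : Γ, IsDelta v U W γ →
      (resSet v (U : Set (Fin n → K)) = resSet v (W : Set (Fin n → K)) ↔ γ < 1)) ∧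
    (∀ M : Matrix (Fin n) (Fin n) K, MemGLO v M → ∀ γ : Γ,
      (IsDelta v U W γ ↔ IsDelta v (U.map M.mulVecLin) (W.map M.mulVecLin) γ)) := by
  constructor
  · -- Part (1)
    rintro γ ⟨hle, hmin⟩
    constructor
    · -- res U = res W → γ < 1
      intro hres
      obtain ⟨d, u, huU, huvv, huspan, huorth⟩ :=
        exists_orthobasis v (Module.finrank K U) U le_rfl
      have hu1 : ∀ i, vv v (u i) ≤ 1 := fun i => (huvv i).le
      have hw : ∀ i : Fin d, ∃ w, (w ∈ W ∧ vv v w ≤ 1) ∧ resv v w = resv v (u i) := by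
        intro i
        have hmem : resv v (u i) ∈ resSet v (W : Set (Fin n → K)) := by
          rw [← hres]
          exact (mem_resSet_iff v).mpr ⟨u i, ⟨huU i, hu1 i⟩, rfl⟩
        exact (mem_resSet_iff v).mp hmem
      choose w hwW hwres using hw
      set δ : Γ := Finset.univ.sup fun i => vv v (u i - w i) with hδdef
      have hδlt : δ < 1 := by
        rw [hδdef]
        rw [Finset.sup_lt_iff (by rw [bot_eq_zero]; exact zero_lt_one'')]
        intro i _
        exact vv_sub_lt_of_resv_eq v (hu1 i) (hwW i).2 (hwres i).symm
      have hDLE : DeltaLE v U W δ := by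
        intro x hxU
        obtain ⟨c, rfl⟩ := huspan x hxU
        refine ⟨∑ i, c i • w i,
          Submodule.sum_mem _ (fun i _ => W.smul_mem _ (hwW i).1), ?_⟩
        have hdiff : (∑ i, c i • u i) - (∑ i, c i • w i) = ∑ i, c i • (u i - w i) := by
          rw [← Finset.sum_sub_distrib]
          exact Finset.sum_congr rfl fun i _ => (smul_sub (c i) (u i) (w i)).symm
        rw [hdiff, huorth]
        apply vv_sum_le
        intro i _
        rw [vv_smul]
        exact mul_le_mul' (Finset.le_sup (f := fun i => v (c i)) (Finset.mem_univ i))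
          (Finset.le_sup (f := fun i => vv v (u i - w i)) (Finset.mem_univ i))
      exact lt_of_le_of_lt (hmin δ hDLE) hδlt
    · -- γ < 1 → res U = res W
      intro hγ1
      have hsub : resSub v U ≤ resSub v W := by
        intro a ha
        have ha' : a ∈ resSet v (U : Set (Fin n → K)) := ha
        obtain ⟨x, ⟨hxU, hx1⟩, rfl⟩ := (mem_resSet_iff v).mp ha'
        obtain ⟨w, hwW, hvw⟩ := hle x hxU
        have h2 : vv v (x - w) < 1 := by
          refine lt_of_le_of_lt hvw ?_
          calc vv v x * γ ≤ 1 * γ := mul_le_mul_left hx1 γ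
            _ = γ := one_mul γ
            _ < 1 := hγ1
        have hw1 : vv v w ≤ 1 := by
          have : w = x - (x - w) := by abel
          rw [this]
          exact le_trans (vv_sub_le v x (x - w)) (max_le hx1 h2.le)
        have hres : resv v x = resv v w := resv_sub_eq_zero v hx1 hw1 h2
        show resv v x ∈ resSet v (W : Set (Fin n → K))
        rw [hres]
        exact (mem_resSet_iff v).mpr ⟨w, ⟨hwW, hw1⟩, rfl⟩
      have heq : resSub v U = resSub v W := by
        refine Submodule.eq_of_le_of_finrank_le hsub ?_
        rw [finrank_resSub, finrank_resSub, hdim]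
      calc resSet v (U : Set (Fin n → K)) = (resSub v U : Set (Fin n → Kbar v)) := rfl
        _ = (resSub v W : Set (Fin n → Kbar v)) := by rw [heq]
        _ = resSet v (W : Set (Fin n → K)) := rfl
  · -- Part (2)
    intro M hM γ
    obtain ⟨hMO, N, hMN, hNM, hNO⟩ := hM
    have hM' : MemGLO v M := ⟨hMO, N, hMN, hNM, hNO⟩
    have hN' : MemGLO v N := ⟨hNO, M, hNM, hMN, hMO⟩
    constructor
    · rintro ⟨h1, h2⟩
      refine ⟨deltaLE_map v hM' h1, ?_⟩
      intro δ hδ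
      apply h2
      have h3 := deltaLE_map v hN' hδ
      rwa [map_map_eq hNM U, map_map_eq hNM W] at h3
    · rintro ⟨h1, h2⟩
      constructor
      · have h3 := deltaLE_map v hN' h1
        rwa [map_map_eq hNM U, map_map_eq hNM W] at h3
      · intro δ hδ
        exact h2 δ (deltaLE_map v hM' hδ)


end
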